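/- Let X be a finite type with Fintype.card X = m, let σ : Equiv.Perm X, and let P : Matrix X X ℤ be the permutation matrix of σ. For each i, let N_i(σ) be the number of i-element subsets s of X with s.image σ = s. Then in Polynomial ℤ: (∑_{i=0}^{m} (N_i(σ) : ℤ) • X^i) * det((1 : Matrix X X (Polynomial ℤ)) - X • P.map C) = det((1 : Matrix X X (Polynomial ℤ)) - X^2 • P.map C). -/

import Mathlib

open Equiv Polynomial Finset Matrix

namespace Stmt8Aux

variable {X : Type*} [Fintype X] [DecidableEq X]

set_option linter.unusedSectionVars false

/-- The permutation matrix over `ℤ[X]`. -/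
noncomputable def pm (σ : Equiv.Perm X) : Matrix X X (Polynomial ℤ) :=
  Matrix.of fun x y => if σ y = x then 1 else 0

lemma pm_one : pm (1 : Equiv.Perm X) = 1 := by
  ext x y
  simp [pm, Matrix.one_apply, eq_comm]

lemma pm_mul (σ τ : Equiv.Perm X) : pm (σ * τ) = pm σ * pm τ := by
  ext x y
  simp only [pm, Matrix.mul_apply, Matrix.of_apply]
  rw [Finset.sum_eq_single (τ y)]
  · simp [Equiv.Perm.mul_apply]
    rfl
  · intro b _ hb
    simp [Ne.symm hb]
  · simp

/-- `det (1 - t • pm σ)`. -/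
noncomputable def D (t : Polynomial ℤ) (σ : Equiv.Perm X) : Polynomial ℤ :=
  Matrix.det ((1 : Matrix X X (Polynomial ℤ)) - t • pm σ)

/-- Generating sum over all invariant subsets. -/
noncomputable def S (σ : Equiv.Perm X) : Polynomial ℤ :=
  ∑ s ∈ Finset.univ.filter (fun s : Finset X => s.image σ = s),
    (Polynomial.X : Polynomial ℤ) ^ s.card

/-- Generating sum over invariant subsets of the support. -/
noncomputable def T (σ : Equiv.Perm X) : Polynomial ℤ :=
  ∑ s ∈ σ.support.powerset.filter (fun s : Finset X => s.image σ = s),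
    (Polynomial.X : Polynomial ℤ) ^ s.card

lemma inv_iff (σ : Equiv.Perm X) (s : Finset X) :
    s.image σ = s ↔ ∀ x ∈ s, σ x ∈ s := by
  constructor
  · intro h x hx
    rw [← h]
    exact Finset.mem_image_of_mem σ hx
  · intro h
    apply Finset.eq_of_subset_of_card_le
    · intro y hy
      obtain ⟨x, hx, rfl⟩ := Finset.mem_image.mp hy
      exact h x hx
    · rw [Finset.card_image_of_injective _ σ.injective]

lemma pow_mem_of_inv {σ : Equiv.Perm X} {s : Finset X} (h : s.image σ = s)
    {x : X} (hx : x ∈ s) (n : ℕ) : (σ ^ n) x ∈ s := by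
  induction n with
  | zero => simpa using hx
  | succ n ih =>
    rw [pow_succ', Equiv.Perm.mul_apply]
    exact (inv_iff σ s).mp h _ ih

lemma disjoint_matrix {c τ : Equiv.Perm X} (h : c.Disjoint τ) :
    pm c + pm τ = pm (c * τ) + 1 := by
  ext x y
  simp only [pm, Matrix.add_apply, Matrix.of_apply, Matrix.one_apply,
    Equiv.Perm.mul_apply]
  by_cases h2 : τ y = y
  · simp only [h2]
    congr 1
    rcases eq_or_ne x y with rfl | hxy
    · simp
    · simp [hxy, Ne.symm hxy]
  · have hy : c y = y := (h y).resolve_right h2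
    have h3 : c (τ y) = τ y :=
      (h (τ y)).resolve_right fun h3 => h2 (τ.injective h3)
    simp only [hy, h3]
    have : (if x = y then (1 : Polynomial ℤ) else 0) = if y = x then 1 else 0 := by
      rcases eq_or_ne x y with rfl | hxy
      · simp
      · simp [hxy, Ne.symm hxy]
    rw [this, add_comm]

lemma onesub_mul (t : Polynomial ℤ) {c τ : Equiv.Perm X} (h : c.Disjoint τ) :
    ((1 : Matrix X X (Polynomial ℤ)) - t • pm c) * (1 - t • pm τ) =
      (1 - t) • ((1 : Matrix X X (Polynomial ℤ)) - t • pm (c * τ)) := by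
  have hAB : pm c * pm τ = pm (c * τ) := (pm_mul c τ).symm
  have hpc : pm c = pm (c * τ) + 1 - pm τ := by
    rw [← disjoint_matrix h]
    abel
  rw [sub_mul, one_mul, mul_sub, mul_one, Matrix.mul_smul, Matrix.smul_mul, smul_smul,
    hAB, hpc]
  module

lemma D_disjoint (t : Polynomial ℤ) {c τ : Equiv.Perm X} (h : c.Disjoint τ) :
    D t c * D t τ = (1 - t) ^ Fintype.card X * D t (c * τ) := by
  rw [D, D, D, ← Matrix.det_mul, onesub_mul t h, Matrix.det_smul]

lemma S_eq_T (σ : Equiv.Perm X) :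
    S σ = T σ * (1 + Polynomial.X) ^ (Fintype.card X - σ.support.card) := by
  have hpow : ∀ u : Finset X,
      ∑ b ∈ u.powerset, (Polynomial.X : Polynomial ℤ) ^ b.card = (1 + Polynomial.X) ^ u.card := by
    intro u
    have := Finset.prod_add (fun _ : X => (Polynomial.X : Polynomial ℤ)) (fun _ => 1) u
    simp only [Finset.prod_const, Finset.prod_const_one, one_pow, mul_one] at this
    rw [add_comm 1 Polynomial.X, ← this]
  have hcard : σ.supportᶜ.card = Fintype.card X - σ.support.card := Finset.card_compl _
  rw [← hcard, ← hpow σ.supportᶜ, T, Finset.sum_mul_sum, S]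
  rw [← Finset.sum_product']
  refine Finset.sum_nbij' (fun s => (s ∩ σ.support, s \ σ.support))
    (fun p => p.1 ∪ p.2) ?_ ?_ ?_ ?_ ?_
  · intro s hs
    simp only [Finset.mem_filter, Finset.mem_univ, true_and] at hs
    simp only [Finset.mem_product, Finset.mem_filter, Finset.mem_powerset]
    refine ⟨⟨Finset.inter_subset_right, ?_⟩, ?_⟩
    · rw [inv_iff]
      intro x hx
      rw [Finset.mem_inter] at hx ⊢
      exact ⟨(inv_iff σ s).mp hs x hx.1, Equiv.Perm.apply_mem_support.mpr hx.2⟩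
    · intro x hx
      rw [Finset.mem_sdiff] at hx
      simpa using hx.2
  · intro p hp
    simp only [Finset.mem_product, Finset.mem_filter, Finset.mem_powerset] at hp
    simp only [Finset.mem_filter, Finset.mem_univ, true_and]
    rw [inv_iff]
    intro x hx
    rcases Finset.mem_union.mp hx with hx | hx
    · exact Finset.mem_union_left _ ((inv_iff σ p.1).mp hp.1.2 x hx)
    · have : σ x = x := by
        have := hp.2 hx
        simp only [Finset.mem_compl, Equiv.Perm.mem_support, not_not] at this
        exact this
      rw [this]
      exact Finset.mem_union_right _ hx
  · intro s _
    dsimp only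
    exact sup_inf_sdiff s σ.support
  · intro p hp
    simp only [Finset.mem_product, Finset.mem_filter, Finset.mem_powerset] at hp
    have h1 : p.1 ⊆ σ.support := hp.1.1
    have h2 : Disjoint p.2 σ.support := by
      rw [Finset.disjoint_left]
      intro a ha
      have := hp.2 ha
      simpa using this
    have e1 : (p.1 ∪ p.2) ∩ σ.support = p.1 := by
      rw [Finset.union_inter_distrib_right, Finset.inter_eq_left.mpr h1,
        Finset.disjoint_iff_inter_eq_empty.mp h2, Finset.union_empty]
    have e2 : (p.1 ∪ p.2) \ σ.support = p.2 := by
      rw [Finset.union_sdiff_distrib, Finset.sdiff_eq_empty_iff_subset.mpr h1,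
        Finset.sdiff_eq_self_of_disjoint h2, Finset.empty_union]
    rw [Prod.mk.injEq]
    exact ⟨e1, e2⟩
  · intro s hs
    rw [← pow_add]
    congr 1
    rw [Finset.card_inter_add_card_sdiff]

lemma T_one : T (1 : Equiv.Perm X) = 1 := by
  rw [T]
  simp

lemma T_disjoint {c τ : Equiv.Perm X} (h : c.Disjoint τ) :
    T (c * τ) = T c * T τ := by
  have hds : Disjoint c.support τ.support := h.disjoint_support
  have hsupp : (c * τ).support = c.support ∪ τ.support := h.support_mul
  have hfix1 : ∀ x ∈ c.support, τ x = x := fun x hx =>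
    (h x).resolve_left (Equiv.Perm.mem_support.mp hx)
  have hfix2 : ∀ x ∈ τ.support, c x = x := fun x hx =>
    (h x).resolve_right (Equiv.Perm.mem_support.mp hx)
  have happ1 : ∀ x ∈ c.support, (c * τ) x = c x := by
    intro x hx
    rw [Equiv.Perm.mul_apply, hfix1 x hx]
  have happ2 : ∀ x ∈ τ.support, (c * τ) x = τ x := by
    intro x hx
    rw [Equiv.Perm.mul_apply]
    exact hfix2 _ (Equiv.Perm.apply_mem_support.mpr hx)
  rw [T, T, T, Finset.sum_mul_sum, ← Finset.sum_product']
  refine Finset.sum_nbij' (fun s => (s ∩ c.support, s ∩ τ.support))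
    (fun p => p.1 ∪ p.2) ?_ ?_ ?_ ?_ ?_
  · intro s hs
    simp only [Finset.mem_filter, Finset.mem_powerset, hsupp] at hs
    simp only [Finset.mem_product, Finset.mem_filter, Finset.mem_powerset]
    constructor
    · refine ⟨Finset.inter_subset_right, ?_⟩
      rw [inv_iff]
      intro x hx
      rw [Finset.mem_inter] at hx ⊢
      refine ⟨?_, Equiv.Perm.apply_mem_support.mpr hx.2⟩
      have := (inv_iff _ s).mp hs.2 x hx.1
      rwa [happ1 x hx.2] at this
    · refine ⟨Finset.inter_subset_right, ?_⟩
      rw [inv_iff]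
      intro x hx
      rw [Finset.mem_inter] at hx ⊢
      refine ⟨?_, Equiv.Perm.apply_mem_support.mpr hx.2⟩
      have := (inv_iff _ s).mp hs.2 x hx.1
      rwa [happ2 x hx.2] at this
  · intro p hp
    simp only [Finset.mem_product, Finset.mem_filter, Finset.mem_powerset] at hp
    simp only [Finset.mem_filter, Finset.mem_powerset, hsupp]
    constructor
    · exact Finset.union_subset_union hp.1.1 hp.2.1
    · rw [inv_iff]
      intro x hx
      rcases Finset.mem_union.mp hx with hx | hx
      · rw [happ1 x (hp.1.1 hx)]
        exact Finset.mem_union_left _ ((inv_iff _ _).mp hp.1.2 x hx)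
      · rw [happ2 x (hp.2.1 hx)]
        exact Finset.mem_union_right _ ((inv_iff _ _).mp hp.2.2 x hx)
  · intro s hs
    simp only [Finset.mem_filter, Finset.mem_powerset, hsupp] at hs
    dsimp only
    rw [← Finset.inter_union_distrib_left, Finset.inter_eq_left.mpr hs.1]
  · intro p hp
    simp only [Finset.mem_product, Finset.mem_filter, Finset.mem_powerset] at hp
    have e1 : (p.1 ∪ p.2) ∩ c.support = p.1 := by
      rw [Finset.union_inter_distrib_right, Finset.inter_eq_left.mpr hp.1.1,
        Finset.disjoint_iff_inter_eq_empty.mp (hds.symm.mono_left hp.2.1),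
        Finset.union_empty]
    have e2 : (p.1 ∪ p.2) ∩ τ.support = p.2 := by
      rw [Finset.union_inter_distrib_right, Finset.inter_eq_left.mpr hp.2.1,
        Finset.disjoint_iff_inter_eq_empty.mp (hds.mono_left hp.1.1),
        Finset.empty_union]
    rw [Prod.mk.injEq]
    exact ⟨e1, e2⟩
  · intro s hs
    simp only [Finset.mem_filter, Finset.mem_powerset, hsupp] at hs
    rw [← pow_add]
    congr 1
    have hd : Disjoint (s ∩ c.support) (s ∩ τ.support) :=
      (hds.mono Finset.inter_subset_right Finset.inter_subset_right)
    rw [← Finset.card_union_of_disjoint hd, ← Finset.inter_union_distrib_left,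
      Finset.inter_eq_left.mpr hs.1]

lemma T_cycle {c : Equiv.Perm X} (hc : c.IsCycle) :
    T c = 1 + (Polynomial.X : Polynomial ℤ) ^ c.support.card := by
  have hset : c.support.powerset.filter (fun s : Finset X => s.image c = s) =
      {∅, c.support} := by
    ext s
    simp only [Finset.mem_filter, Finset.mem_powerset, Finset.mem_insert,
      Finset.mem_singleton]
    constructor
    · rintro ⟨hsub, hinv⟩
      rcases Finset.eq_empty_or_nonempty s with rfl | ⟨x, hx⟩
      · left; rfl
      · right
        apply Finset.Subset.antisymm hsub
        intro y hy
        have hxs : c x ≠ x := Equiv.Perm.mem_support.mp (hsub hx)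
        have hys : c y ≠ y := Equiv.Perm.mem_support.mp hy
        obtain ⟨n, hn⟩ := hc.exists_pow_eq hxs hys
        rw [← hn]
        exact pow_mem_of_inv hinv hx n
    · rintro (rfl | rfl)
      · simp
      · refine ⟨Finset.Subset.refl _, ?_⟩
        rw [inv_iff]
        intro x hx
        exact Equiv.Perm.apply_mem_support.mpr hx
  rw [T, hset]
  have hne : (∅ : Finset X) ≠ c.support := by
    intro h
    have := hc.two_le_card_support
    rw [← h] at this
    simp at this
  rw [Finset.sum_pair hne]
  simp

lemma cycle_perm_eq {c : Equiv.Perm X} (hc : c.IsCycle) (τ : Equiv.Perm X)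
    (hτ : ∀ x, τ x = x ∨ τ x = c x) : τ = 1 ∨ τ = c := by
  by_cases hfix : ∀ x, c x ≠ x → τ x = x
  · left
    ext x
    rcases eq_or_ne (c x) x with h | h
    · rcases hτ x with h1 | h1
      · simpa using h1
      · simp [h1, h]
    · simpa using hfix x h
  · right
    push_neg at hfix
    obtain ⟨x0, hx0, hτx0⟩ := hfix
    have hx0' : τ x0 = c x0 := (hτ x0).resolve_left hτx0
    have key : ∀ n : ℕ, τ ((c ^ n) x0) = c ((c ^ n) x0) := by
      intro n
      induction n with
      | zero => simpa using hx0'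
      | succ n ih =>
        have hm : c ((c ^ n) x0) ≠ (c ^ n) x0 := by
          have : (c ^ n) x0 ∈ c.support :=
            Equiv.Perm.pow_apply_mem_support.mpr (Equiv.Perm.mem_support.mpr hx0)
          exact Equiv.Perm.mem_support.mp this
        have goal' : τ (c ((c ^ n) x0)) = c (c ((c ^ n) x0)) := by
          rcases hτ (c ((c ^ n) x0)) with h | h
          · exfalso
            have := τ.injective (h.trans ih.symm)
            exact hm this
          · exact h
        have hrw : (c ^ (n + 1)) x0 = c ((c ^ n) x0) := by
          rw [pow_succ', Equiv.Perm.mul_apply]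
        rw [hrw]
        exact goal'
    ext y
    rcases eq_or_ne (c y) y with h | h
    · rcases hτ y with h1 | h1
      · rw [h1, h]
      · rw [h1]
    · obtain ⟨n, hn⟩ := hc.exists_pow_eq hx0 h
      rw [← hn]
      exact key n

lemma D_cycle (t : Polynomial ℤ) {c : Equiv.Perm X} (hc : c.IsCycle) :
    D t c = (1 - t ^ c.support.card) *
      (1 - t) ^ (Fintype.card X - c.support.card) := by
  classical
  have hentry : ∀ (τ : Equiv.Perm X) (x : X),
      ((1 : Matrix X X (Polynomial ℤ)) - t • pm c) (τ x) x =
        (if τ x = x then 1 else 0) - t * (if c x = τ x then 1 else 0) := by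
    intro τ x
    simp [pm, Matrix.sub_apply, Matrix.one_apply, Matrix.smul_apply, smul_eq_mul]
  rw [D, Matrix.det_apply']
  have hsub : ({1, c} : Finset (Equiv.Perm X)) ⊆ Finset.univ := Finset.subset_univ _
  rw [← Finset.sum_subset hsub]
  · have hne : (1 : Equiv.Perm X) ≠ c := fun h => hc.ne_one h.symm
    rw [Finset.sum_pair hne]
    have hfixcard : (Finset.univ.filter fun x : X => c x = x).card =
        Fintype.card X - c.support.card := by
      have : (Finset.univ.filter fun x : X => c x = x) = c.supportᶜ := by
        ext x
        simp [Equiv.Perm.mem_support, not_not]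
      rw [this, Finset.card_compl]
    have hprod1 : ∏ x : X, ((1 : Matrix X X (Polynomial ℤ)) - t • pm c) ((1 : Equiv.Perm X) x) x
        = (1 - t) ^ (Fintype.card X - c.support.card) := by
      have : ∀ x : X, ((1 : Matrix X X (Polynomial ℤ)) - t • pm c) ((1 : Equiv.Perm X) x) x =
          if c x = x then 1 - t else 1 := by
        intro x
        rw [hentry]
        rcases eq_or_ne (c x) x with h | h
        · simp [h]
        · simp [h]
      rw [Finset.prod_congr rfl (fun x _ => this x), Finset.prod_ite, Finset.prod_const,
        Finset.prod_const, hfixcard, one_pow, mul_one]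
    have hprod2 : ∏ x : X, ((1 : Matrix X X (Polynomial ℤ)) - t • pm c) (c x) x
        = (1 - t) ^ (Fintype.card X - c.support.card) * (-t) ^ c.support.card := by
      have : ∀ x : X, ((1 : Matrix X X (Polynomial ℤ)) - t • pm c) (c x) x =
          if c x = x then 1 - t else -t := by
        intro x
        rw [hentry]
        rcases eq_or_ne (c x) x with h | h
        · simp [h]
        · simp [h]
      rw [Finset.prod_congr rfl (fun x _ => this x), Finset.prod_ite, Finset.prod_const,
        Finset.prod_const, hfixcard]
      congr 1
    rw [hprod1, hprod2]
    have hsign1 : Equiv.Perm.sign (1 : Equiv.Perm X) = 1 := by simp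
    have hsignc : Equiv.Perm.sign c = -(-1) ^ c.support.card := hc.sign
    rw [hsign1, hsignc]
    push_cast
    have hnt : (-t) ^ c.support.card = (-1) ^ c.support.card * t ^ c.support.card := by
      rw [← mul_pow]; ring_nf
    rw [hnt]
    have h11 : ((-1 : Polynomial ℤ)) ^ c.support.card * (-1) ^ c.support.card = 1 := by
      rw [← mul_pow]; norm_num
    linear_combination
      (-((1 - t) ^ (Fintype.card X - c.support.card) * t ^ c.support.card)) * h11
  · intro τ _ hτ
    simp only [Finset.mem_insert, Finset.mem_singleton] at hτ
    push_neg at hτ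
    have : ¬ (∀ x, τ x = x ∨ τ x = c x) := by
      intro h
      rcases cycle_perm_eq hc τ h with h1 | h1
      · exact hτ.1 h1
      · exact hτ.2 h1
    push_neg at this
    obtain ⟨x, hx1, hx2⟩ := this
    have hzero : ((1 : Matrix X X (Polynomial ℤ)) - t • pm c) (τ x) x = 0 := by
      rw [hentry]
      rw [if_neg hx1, if_neg (fun h => hx2 h.symm)]
      ring
    have hz2 : (∏ i : X, ((1 : Matrix X X (Polynomial ℤ)) - t • pm c) (τ i) i) = 0 :=
      Finset.prod_eq_zero (Finset.mem_univ x) hzero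
    rw [hz2, mul_zero]

lemma D_one (t : Polynomial ℤ) :
    D t (1 : Equiv.Perm X) = (1 - t) ^ Fintype.card X := by
  rw [D, pm_one]
  have : (1 : Matrix X X (Polynomial ℤ)) - t • 1 = (1 - t) • 1 := by
    rw [sub_smul, one_smul]
  rw [this, Matrix.det_smul, Matrix.det_one, mul_one]

lemma poly_ne_zero_one_add : (1 + Polynomial.X : Polynomial ℤ) ≠ 0 := by
  intro h
  have := congrArg (Polynomial.eval 0) h
  simp at this

lemma poly_ne_zero_one_sub : (1 - Polynomial.X : Polynomial ℤ) ≠ 0 := by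
  intro h
  have := congrArg (Polynomial.eval 0) h
  simp at this

/-- The main cycle induction. -/
lemma main (σ : Equiv.Perm X) :
    S σ * D Polynomial.X σ = D (Polynomial.X ^ 2) σ := by
  induction σ using Equiv.Perm.cycle_induction_on with
  | base_one =>
    rw [S_eq_T, T_one, D_one, D_one]
    simp only [Equiv.Perm.support_one, Finset.card_empty, Nat.sub_zero, one_mul]
    rw [← mul_pow]
    ring_nf
  | base_cycles c hc =>
    rw [S_eq_T, T_cycle hc, D_cycle _ hc, D_cycle _ hc]
    have h1 : ((1 : Polynomial ℤ) - Polynomial.X ^ 2) ^ (Fintype.card X - c.support.card) =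
        (1 + Polynomial.X) ^ (Fintype.card X - c.support.card) *
          (1 - Polynomial.X) ^ (Fintype.card X - c.support.card) := by
      rw [← mul_pow]
      ring_nf
    have h2 : (1 : Polynomial ℤ) - (Polynomial.X ^ 2) ^ c.support.card =
        (1 + Polynomial.X ^ c.support.card) * (1 - Polynomial.X ^ c.support.card) := by
      have : ((Polynomial.X : Polynomial ℤ) ^ 2) ^ c.support.card =
          (Polynomial.X ^ c.support.card) ^ 2 := by
        rw [← pow_mul, ← pow_mul, mul_comm]
      rw [this]
      ring
    rw [h1, h2]
    ring
  | induction_disjoint c τ hd hc hrec1 hrec2 =>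
    have hm : c.support.card + τ.support.card ≤ Fintype.card X := by
      rw [← hd.card_support_mul]
      exact (c * τ).support.card_le_univ.trans_eq Finset.card_univ
    have hkm : c.support.card ≤ Fintype.card X := le_trans (Nat.le_add_right _ _) hm
    have hlm : τ.support.card ≤ Fintype.card X := le_trans (Nat.le_add_left _ _) hm
    have hexp : (Fintype.card X - c.support.card) + (Fintype.card X - τ.support.card) =
        (Fintype.card X - (c.support.card + τ.support.card)) + Fintype.card X := by
      omega
    have hS : S c * S τ = S (c * τ) * (1 + Polynomial.X) ^ Fintype.card X := by
      calc S c * S τ = (T c * T τ) * (1 + Polynomial.X) ^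
            ((Fintype.card X - c.support.card) + (Fintype.card X - τ.support.card)) := by
            rw [S_eq_T, S_eq_T, pow_add]; ring
        _ = (T (c * τ) * (1 + Polynomial.X) ^
              (Fintype.card X - (c.support.card + τ.support.card))) *
            (1 + Polynomial.X) ^ Fintype.card X := by
            rw [T_disjoint hd, hexp, pow_add]; ring
        _ = S (c * τ) * (1 + Polynomial.X) ^ Fintype.card X := by
            rw [S_eq_T, hd.card_support_mul]
    have hDx := D_disjoint Polynomial.X hd
    have hDx2 := D_disjoint (Polynomial.X ^ 2) hd
    have hnz : ((1 + Polynomial.X) ^ Fintype.card X *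
        (1 - Polynomial.X) ^ Fintype.card X : Polynomial ℤ) ≠ 0 :=
      mul_ne_zero (pow_ne_zero _ poly_ne_zero_one_add) (pow_ne_zero _ poly_ne_zero_one_sub)
    apply mul_right_cancel₀ hnz
    calc S (c * τ) * D Polynomial.X (c * τ) *
          ((1 + Polynomial.X) ^ Fintype.card X * (1 - Polynomial.X) ^ Fintype.card X)
        = (S (c * τ) * (1 + Polynomial.X) ^ Fintype.card X) *
          ((1 - Polynomial.X) ^ Fintype.card X * D Polynomial.X (c * τ)) := by ring
      _ = (S c * S τ) * (D Polynomial.X c * D Polynomial.X τ) := by rw [← hS, ← hDx]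
      _ = (S c * D Polynomial.X c) * (S τ * D Polynomial.X τ) := by ring
      _ = D (Polynomial.X ^ 2) c * D (Polynomial.X ^ 2) τ := by rw [hrec1, hrec2]
      _ = (1 - Polynomial.X ^ 2) ^ Fintype.card X * D (Polynomial.X ^ 2) (c * τ) := hDx2
      _ = D (Polynomial.X ^ 2) (c * τ) *
          ((1 + Polynomial.X) ^ Fintype.card X * (1 - Polynomial.X) ^ Fintype.card X) := by
        rw [← mul_pow]
        ring_nf

end Stmt8Aux

/-- third Lemma in the proof of Theorem 3, in denominator-cleared form.
For a permutation `σ` of an `m`-element set `X` with permutation matrix `P` and `N i` the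
number of `i`-element subsets `s` of `X` with `s.image σ = s`, in `Polynomial ℤ` we have
`(∑_{i=0}^{m} N_i • X^i) ⬝ det(1 - X • P) = det(1 - X² • P)`. -/
theorem stmt_8 (X : Type*) [Fintype X] [DecidableEq X] (m : ℕ) (hm : Fintype.card X = m)
    (σ : Equiv.Perm X) (P : Matrix X X ℤ)
    (hP : ∀ x y, P x y = if σ y = x then 1 else 0)
    (N : ℕ → ℕ)
    (hN : ∀ i, N i =
      (Finset.univ.filter fun s : Finset X => s.card = i ∧ s.image σ = s).card) :
    (∑ i ∈ Finset.range (m + 1), (N i : ℤ) • (Polynomial.X : Polynomial ℤ) ^ i) *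
        Matrix.det ((1 : Matrix X X (Polynomial ℤ)) -
          (Polynomial.X : Polynomial ℤ) • P.map Polynomial.C) =
      Matrix.det ((1 : Matrix X X (Polynomial ℤ)) -
        ((Polynomial.X : Polynomial ℤ) ^ 2) • P.map Polynomial.C) := by
  have hPpm : P.map Polynomial.C = Stmt8Aux.pm σ := by
    ext x y
    simp [Matrix.map_apply, hP, Stmt8Aux.pm, apply_ite (Polynomial.C : ℤ → Polynomial ℤ)]
  have hsum : (∑ i ∈ Finset.range (m + 1), (N i : ℤ) • (Polynomial.X : Polynomial ℤ) ^ i)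
      = Stmt8Aux.S σ := by
    rw [Stmt8Aux.S]
    rw [← Finset.sum_fiberwise_of_maps_to (g := fun s : Finset X => s.card)
      (t := Finset.range (m + 1)) (fun s _ => by
        rw [Finset.mem_range, Nat.lt_succ_iff, ← hm]
        exact s.card_le_univ.trans_eq Finset.card_univ)
      (fun s => (Polynomial.X : Polynomial ℤ) ^ s.card)]
    refine Finset.sum_congr rfl fun i _ => ?_
    rw [Finset.filter_filter]
    have hfil : (Finset.univ.filter fun s : Finset X => s.image σ = s ∧ s.card = i) =
        (Finset.univ.filter fun s : Finset X => s.card = i ∧ s.image σ = s) := by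
      apply Finset.filter_congr
      intro s _
      tauto
    rw [hfil]
    have : ∀ s ∈ Finset.univ.filter fun s : Finset X => s.card = i ∧ s.image σ = s,
        (Polynomial.X : Polynomial ℤ) ^ s.card = Polynomial.X ^ i := by
      intro s hs
      rw [Finset.mem_filter] at hs
      rw [hs.2.1]
    rw [Finset.sum_congr rfl this, Finset.sum_const, hN i]
    rw [zsmul_eq_mul, nsmul_eq_mul]
    push_cast
    ring
  rw [hPpm, hsum]
  exact Stmt8Aux.main σ
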